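/- Let d ≥ 1 and let t : Fin n → ℝ be strictly monotone with 0 ≤ t i for all i. For each i let u i ∈ EuclideanSpace ℝ (Fin d) be the vector with coordinates (u i) k = (t i)^k for k = 0, …, d−1, and let U i = ℝ ∙ (u i) be the line it spans. Then the family U is generic: for every subset s of Fin n with s.card = d one has ⨆ i ∈ s, U i = ⊤, and U i ⊓ (U j)ᗮ = ⊥ for all i, j. -/

import Mathlib

open scoped RealInnerProductSpace

theorem vandermonde_lines_generic {d n : ℕ} (hd : 1 ≤ d)
    (t : Fin n → ℝ) (ht : StrictMono t) (ht0 : ∀ i, 0 ≤ t i)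
    (u : Fin n → EuclideanSpace ℝ (Fin d))
    (hu : ∀ (i : Fin n) (k : Fin d), u i k = t i ^ (k : ℕ))
    (U : Fin n → Submodule ℝ (EuclideanSpace ℝ (Fin d)))
    (hU : ∀ i, U i = Submodule.span ℝ {u i}) :
    (∀ s : Finset (Fin n), s.card = d → (⨆ i ∈ s, U i) = ⊤) ∧
    ∀ i j, U i ⊓ (U j)ᗮ = ⊥ := by
  constructor
  · intro s hs
    have hdpos : 0 < d := hd
    haveI : Nonempty (Fin d) := ⟨⟨0, hdpos⟩⟩
    set e : Fin d ≃o {x // x ∈ s} := s.orderIsoOfFin hs with he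
    set f : Fin d → ℝ := fun m => t (e m) with hf
    have hfinj : Function.Injective f := by
      intro a b hab
      exact e.injective (Subtype.coe_injective (ht.injective hab))
    have hdet : (Matrix.vandermonde f).det ≠ 0 :=
      Matrix.det_vandermonde_ne_zero_iff.mpr hfinj
    have hrows : LinearIndependent ℝ (fun m : Fin d => u (e m)) := by
      have h1 : LinearIndependent ℝ (fun m : Fin d => (Matrix.vandermonde f) m) := by
        exact Matrix.linearIndependent_rows_iff_isUnit.mpr
          ((Matrix.isUnit_iff_isUnit_det _).mpr (isUnit_iff_ne_zero.mpr hdet))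
      have heq : (fun m : Fin d => u (e m))
          = fun m : Fin d => (WithLp.toLp 2 ((Matrix.vandermonde f) m) : EuclideanSpace ℝ (Fin d)) := by
        funext m
        ext k
        simp [hu, Matrix.vandermonde, hf]
      rw [heq]
      exact h1.map' (WithLp.linearEquiv 2 ℝ (Fin d → ℝ)).symm.toLinearMap
        (WithLp.linearEquiv 2 ℝ (Fin d → ℝ)).symm.ker
    have hspan : Submodule.span ℝ (Set.range fun m : Fin d => u (e m)) = ⊤ := by
      apply hrows.span_eq_top_of_card_eq_finrank
      simp [finrank_euclideanSpace]
    have hsup : (⨆ i ∈ s, U i) = Submodule.span ℝ (Set.range fun m : Fin d => u (e m)) := by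
      have hrange : (Set.range fun m : Fin d => u (e m)) = u '' (s : Set (Fin n)) := by
        ext x
        constructor
        · rintro ⟨m, rfl⟩; exact ⟨e m, (e m).2, rfl⟩
        · rintro ⟨y, hy, rfl⟩
          exact ⟨e.symm ⟨y, hy⟩, by simp⟩
      rw [hrange]
      simp only [hU]
      rw [← Submodule.span_iUnion₂]
      congr 1
      ext x
      simp [Set.mem_iUnion, eq_comm]
    rw [hsup, hspan]
  · intro i j
    rw [eq_bot_iff]
    intro x hx
    rw [Submodule.mem_inf] at hx
    obtain ⟨hx1, hx2⟩ := hx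
    rw [hU i, Submodule.mem_span_singleton] at hx1
    obtain ⟨c, rfl⟩ := hx1
    have hj : u j ∈ U j := by rw [hU j]; exact Submodule.mem_span_singleton_self _
    have h0 : (inner ℝ (u j) (c • u i) : ℝ) = 0 := hx2 (u j) hj
    have hip : (0:ℝ) < (inner ℝ (u j) (u i) : ℝ) := by
      rw [PiLp.inner_apply]
      simp only [RCLike.inner_apply', conj_trivial]
      have hterm : ∀ k : Fin d, 0 ≤ u j k * u i k := by
        intro k
        rw [hu, hu]
        exact mul_nonneg (pow_nonneg (ht0 j) _) (pow_nonneg (ht0 i) _)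
      have h0mem : (⟨0, hd⟩ : Fin d) ∈ Finset.univ := Finset.mem_univ _
      refine Finset.sum_pos' (fun k _ => hterm k) ⟨⟨0, hd⟩, h0mem, ?_⟩
      rw [hu, hu]
      norm_num
    have hc : c = 0 := by
      rw [inner_smul_right] at h0
      rcases mul_eq_zero.mp h0 with h | h
      · exact h
      · exact absurd h (ne_of_gt hip)
    simp [hc]
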